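/- Let L = ⊕_{i ∈ Z/nZ} L_i be a (Z/nZ)-graded Lie algebra over a field with L_0 = 0 and n odd. Suppose that [[x_{d_1}, x_{d_2}], [x_{d_3}, x]] = 0 for all homogeneous x_{d_i} ∈ L_{d_i} and all x ∈ L, whenever the sequence (d_1, d_2, d_3) is (-1)-independent in Z/nZ. Then L is metabelian, i.e., [[L,L],[L,L]] = 0. -/

import Mathlib

def NegOneDependent {n k : ℕ} (a : Fin k → ZMod n) : Prop :=
  ∃ t : Fin k → Bool, (∃ i, t i = true) ∧ ∑ i, (if t i then a i else 0) = 0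

def NegOneIndependent {n k : ℕ} (a : Fin k → ZMod n) : Prop :=
  ¬ NegOneDependent a

section Helpers

variable {L : Type*} [LieRing L]

theorem lemX (a b c d : L) (hac : ⁅a, c⁆ = 0) (had : ⁅a, d⁆ = 0)
    (hbcd : ⁅⁅b, c⁆, d⁆ = 0) (hcbd : ⁅c, ⁅b, d⁆⁆ = 0) :
    ⁅⁅a, b⁆, ⁅c, d⁆⁆ = 0 := by
  have hca : ⁅c, a⁆ = 0 := by rw [← neg_eq_zero, lie_skew, hac]
  have h1 : ⁅⁅a, b⁆, c⁆ = ⁅a, ⁅b, c⁆⁆ := by rw [lie_lie, hac, lie_zero, sub_zero]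
  have h2 : ⁅⁅a, b⁆, d⁆ = ⁅a, ⁅b, d⁆⁆ := by rw [lie_lie, had, lie_zero, sub_zero]
  have h3 : ⁅⁅a, ⁅b, c⁆⁆, d⁆ = 0 := by
    rw [lie_lie, hbcd, had, lie_zero, lie_zero, sub_zero]
  have h4 : ⁅c, ⁅a, ⁅b, d⁆⁆⁆ = 0 := by
    rw [leibniz_lie, hcbd, lie_zero, add_zero, hca, zero_lie]
  rw [leibniz_lie, h1, h2, h3, h4, add_zero]

theorem lemY (a b c d : L) (h1 : ⁅⁅a, b⁆, c⁆ = 0) (h2 : ⁅⁅a, b⁆, d⁆ = 0) :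
    ⁅⁅a, b⁆, ⁅c, d⁆⁆ = 0 := by
  rw [leibniz_lie, h1, h2, zero_lie, lie_zero, add_zero]

theorem swapo (u v : L) : ⁅u, v⁆ = -⁅v, u⁆ := (lie_skew u v).symm

theorem swapl (a b v : L) : ⁅⁅a, b⁆, v⁆ = -⁅⁅b, a⁆, v⁆ := by
  rw [← lie_skew b a, neg_lie, neg_neg]

theorem swapr (u c d : L) : ⁅u, ⁅c, d⁆⁆ = -⁅u, ⁅d, c⁆⁆ := by
  rw [← lie_skew c d, lie_neg]

end Helpers

theorem two_cancel {n : ℕ} (hodd : Odd n) {x : ZMod n} (h : x + x = 0) : x = 0 := by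
  obtain ⟨m, hm⟩ := hodd
  have key : ((2 * (m + 1) : ℕ) : ZMod n) = 1 := by
    have h2 : (2 * (m + 1) : ℕ) = n + 1 := by omega
    rw [h2, Nat.cast_add, ZMod.natCast_self, Nat.cast_one, zero_add]
  calc x = ((2 * (m + 1) : ℕ) : ZMod n) * x := by rw [key, one_mul]
    _ = ((m + 1 : ℕ) : ZMod n) * (x + x) := by push_cast; ring
    _ = 0 := by rw [h, mul_zero]

theorem indep_of {n : ℕ} {x y z : ZMod n} (h1 : x ≠ 0) (h2 : y ≠ 0) (h3 : z ≠ 0)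
    (h4 : x + y ≠ 0) (h5 : x + z ≠ 0) (h6 : y + z ≠ 0) (h7 : x + y + z ≠ 0) :
    NegOneIndependent ![x, y, z] := by
  rintro ⟨t, ⟨i, hi⟩, hsum⟩
  rw [Fin.sum_univ_three] at hsum
  have hi' : t 0 = true ∨ t 1 = true ∨ t 2 = true := by
    fin_cases i
    · exact Or.inl hi
    · exact Or.inr (Or.inl hi)
    · exact Or.inr (Or.inr hi)
  cases ht0 : t 0 <;> cases ht1 : t 1 <;> cases ht2 : t 2 <;>
      simp [ht0, ht1, ht2] at hsum hi' <;>
    first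
      | exact h1 (by linear_combination hsum)
      | exact h2 (by linear_combination hsum)
      | exact h3 (by linear_combination hsum)
      | exact h4 (by linear_combination hsum)
      | exact h5 (by linear_combination hsum)
      | exact h6 (by linear_combination hsum)
      | exact h7 (by linear_combination hsum)

theorem dep_cases {n : ℕ} {x y z : ZMod n} (h : ¬ NegOneIndependent ![x, y, z]) :
    x = 0 ∨ y = 0 ∨ z = 0 ∨ x + y = 0 ∨ x + z = 0 ∨ y + z = 0 ∨ x + y + z = 0 := by
  by_contra hc
  push_neg at hc
  obtain ⟨h1, h2, h3, h4, h5, h6, h7⟩ := hc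
  exact h (indep_of h1 h2 h3 h4 h5 h6 h7)

theorem stmt_6 (n : ℕ) (hpos : 0 < n) (hodd : Odd n)
    (K : Type) (L : Type) [Field K] [LieRing L] [LieAlgebra K L]
    (A : ZMod n → Submodule K L)
    (hgrade : ∀ i j : ZMod n, ∀ x ∈ A i, ∀ y ∈ A j, ⁅x, y⁆ ∈ A (i + j))
    (hdirect : DirectSum.IsInternal A)
    (h0 : A 0 = ⊥)
    (hsel : ∀ d : Fin 3 → ZMod n, NegOneIndependent d →
      ∀ x₁ ∈ A (d 0), ∀ x₂ ∈ A (d 1), ∀ x₃ ∈ A (d 2), ∀ x : L,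
        ⁅⁅x₁, x₂⁆, ⁅x₃, x⁆⁆ = 0) :
    LieAlgebra.derivedSeries K L 2 = ⊥ := by
  have hzero : ∀ x ∈ A (0 : ZMod n), x = 0 := by
    intro x hx; rw [h0] at hx; simpa using hx
  have hpair : ∀ i j : ZMod n, i + j = 0 → ∀ x ∈ A i, ∀ y ∈ A j, ⁅x, y⁆ = 0 := by
    intro i j hij x hx y hy
    have h := hgrade i j x hx y hy
    rw [hij] at h
    exact hzero _ h
  -- Lemma X with grading hypotheses
  have X : ∀ (α β γ δ : ZMod n) (a b c d : L), a ∈ A α → b ∈ A β → c ∈ A γ → d ∈ A δ →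
      α + γ = 0 → α + δ = 0 → β + γ + δ = 0 → ⁅⁅a, b⁆, ⁅c, d⁆⁆ = 0 := by
    intro α β γ δ a b c d ha hb hc hd e1 e2 e3
    exact lemX a b c d (hpair α γ e1 a ha c hc) (hpair α δ e2 a ha d hd)
      (hpair (β + γ) δ (by linear_combination e3) _ (hgrade β γ b hb c hc) d hd)
      (hpair γ (β + δ) (by linear_combination e3) c hc _ (hgrade β δ b hb d hd))
  have Y : ∀ (α β γ δ : ZMod n) (a b c d : L), a ∈ A α → b ∈ A β → c ∈ A γ → d ∈ A δ →
      α + β + γ = 0 → α + β + δ = 0 → ⁅⁅a, b⁆, ⁅c, d⁆⁆ = 0 := by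
    intro α β γ δ a b c d ha hb hc hd e1 e2
    exact lemY a b c d (hpair (α + β) γ e1 _ (hgrade α β a ha b hb) c hc)
      (hpair (α + β) δ e2 _ (hgrade α β a ha b hb) d hd)
  -- the key homogeneous computation
  have key4 : ∀ (α β γ δ : ZMod n) (a b c d : L), a ∈ A α → b ∈ A β → c ∈ A γ → d ∈ A δ →
      ⁅⁅a, b⁆, ⁅c, d⁆⁆ = 0 := by
    intro α β γ δ a b c d ha hb hc hd
    by_cases hα : α = 0
    · rw [hzero a (hα ▸ ha), zero_lie, zero_lie]
    by_cases hβ : β = 0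
    · rw [hzero b (hβ ▸ hb), lie_zero, zero_lie]
    by_cases hγ : γ = 0
    · rw [hzero c (hγ ▸ hc), zero_lie, lie_zero]
    by_cases hδ : δ = 0
    · rw [hzero d (hδ ▸ hd), lie_zero, lie_zero]
    by_cases hαβ : α + β = 0
    · rw [hpair α β hαβ a ha b hb, zero_lie]
    by_cases hγδ : γ + δ = 0
    · rw [hpair γ δ hγδ c hc d hd, lie_zero]
    by_cases hsum4 : α + β + γ + δ = 0
    · have h := hgrade (α + β) (γ + δ) _ (hgrade α β a ha b hb) _ (hgrade γ δ c hc d hd)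
      rw [show α + β + (γ + δ) = 0 by linear_combination hsum4] at h
      exact hzero _ h
    by_cases hT1 : NegOneIndependent ![α, β, γ]
    · exact hsel _ hT1 a (by simpa using ha) b (by simpa using hb) c (by simpa using hc) d
    by_cases hT2 : NegOneIndependent ![α, β, δ]
    · rw [swapo c d, lie_neg,
        hsel _ hT2 a (by simpa using ha) b (by simpa using hb) d (by simpa using hd) c,
        neg_zero]
    by_cases hT3 : NegOneIndependent ![γ, δ, α]
    · rw [swapo ⁅a, b⁆ ⁅c, d⁆,
        hsel _ hT3 c (by simpa using hc) d (by simpa using hd) a (by simpa using ha) b,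
        neg_zero]
    by_cases hT4 : NegOneIndependent ![γ, δ, β]
    · rw [swapo ⁅a, b⁆ ⁅c, d⁆, swapr ⁅c, d⁆ a b,
        hsel _ hT4 c (by simpa using hc) d (by simpa using hd) b (by simpa using hb) a,
        neg_zero, neg_zero]
    -- residual combinatorial case analysis
    rcases dep_cases hT1 with h|h|h|h|e1|e1|e1
    · exact absurd h hα
    · exact absurd h hβ
    · exact absurd h hγ
    · exact absurd h hαβ
    -- Case e1 : α + γ = 0
    · rcases dep_cases hT2 with h|h|h|h|e2|e2|e2
      · exact absurd h hα
      · exact absurd h hβ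
      · exact absurd h hδ
      · exact absurd h hαβ
      -- e2 : α + δ = 0
      · rcases dep_cases hT4 with h|h|h|h|f|f|f
        · exact absurd h hγ
        · exact absurd h hδ
        · exact absurd h hβ
        · exact absurd h hγδ
        · exact absurd (show α + β + γ + δ = 0 by linear_combination e2 + f) hsum4
        · exact absurd (show α + β + γ + δ = 0 by linear_combination e1 + f) hsum4
        · exact X α β γ δ a b c d ha hb hc hd e1 e2 (by linear_combination f)
      -- e2 : β + δ = 0
      · exact absurd (show α + β + γ + δ = 0 by linear_combination e1 + e2) hsum4
      -- e2 : α + β + δ = 0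
      · rcases dep_cases hT4 with h|h|h|h|f|f|f
        · exact absurd h hγ
        · exact absurd h hδ
        · exact absurd h hβ
        · exact absurd h hγδ
        · rw [swapo ⁅a, b⁆ ⁅c, d⁆,
            X γ δ α β c d a b hc hd ha hb (by linear_combination e1) (by linear_combination f)
              (by linear_combination e2), neg_zero]
        · exact absurd (show α + β + γ + δ = 0 by linear_combination e1 + f) hsum4
        · exact absurd (two_cancel hodd (show α + α = 0 by linear_combination e1 + e2 - f)) hα
    -- Case e1 : β + γ = 0
    · rcases dep_cases hT2 with h|h|h|h|e2|e2|e2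
      · exact absurd h hα
      · exact absurd h hβ
      · exact absurd h hδ
      · exact absurd h hαβ
      -- e2 : α + δ = 0
      · exact absurd (show α + β + γ + δ = 0 by linear_combination e1 + e2) hsum4
      -- e2 : β + δ = 0
      · rcases dep_cases hT3 with h|h|h|h|f|f|f
        · exact absurd h hγ
        · exact absurd h hδ
        · exact absurd h hα
        · exact absurd h hγδ
        · exact absurd (show α + β + γ + δ = 0 by linear_combination f + e2) hsum4
        · exact absurd (show α + β + γ + δ = 0 by linear_combination f + e1) hsum4
        · rw [swapl a b, X β α γ δ b a c d hb ha hc hd e1 e2 (by linear_combination f),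
            neg_zero]
      -- e2 : α + β + δ = 0
      · rcases dep_cases hT3 with h|h|h|h|f|f|f
        · exact absurd h hγ
        · exact absurd h hδ
        · exact absurd h hα
        · exact absurd h hγδ
        · rw [swapo ⁅a, b⁆ ⁅c, d⁆,
            X γ δ α β c d a b hc hd ha hb (by linear_combination f) (by linear_combination e1)
              (by linear_combination e2), neg_zero]
        · exact absurd (show α + β + γ + δ = 0 by linear_combination e1 + f) hsum4
        · exact absurd (two_cancel hodd (show β + β = 0 by linear_combination e1 + e2 - f)) hβ
    -- Case e1 : α + β + γ = 0
    · rcases dep_cases hT2 with h|h|h|h|e2|e2|e2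
      · exact absurd h hα
      · exact absurd h hβ
      · exact absurd h hδ
      · exact absurd h hαβ
      -- e2 : α + δ = 0
      · rcases dep_cases hT4 with h|h|h|h|f|f|f
        · exact absurd h hγ
        · exact absurd h hδ
        · exact absurd h hβ
        · exact absurd h hγδ
        · exact absurd (show α = 0 by linear_combination e1 - f) hα
        · rw [swapo ⁅a, b⁆ ⁅c, d⁆, swapl c d,
            X δ γ α β d c a b hd hc ha hb (by linear_combination e2) (by linear_combination f)
              (by linear_combination e1), neg_zero, neg_zero]
        · exact absurd (two_cancel hodd (show α + α = 0 by linear_combination e1 + e2 - f)) hα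
      -- e2 : β + δ = 0
      · rcases dep_cases hT3 with h|h|h|h|f|f|f
        · exact absurd h hγ
        · exact absurd h hδ
        · exact absurd h hα
        · exact absurd h hγδ
        · exact absurd (show β = 0 by linear_combination e1 - f) hβ
        · rw [swapo ⁅a, b⁆ ⁅c, d⁆, swapl c d,
            X δ γ α β d c a b hd hc ha hb (by linear_combination f) (by linear_combination e2)
              (by linear_combination e1), neg_zero, neg_zero]
        · exact absurd (two_cancel hodd (show β + β = 0 by linear_combination e1 + e2 - f)) hβ
      -- e2 : α + β + δ = 0
      · exact Y α β γ δ a b c d ha hb hc hd e1 e2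
  -- extend to arbitrary elements, one slot at a time
  have htop : ∀ x : L, x ∈ ⨆ i, A i := by
    intro x
    rw [hdirect.submodule_iSup_eq_top]
    exact Submodule.mem_top
  have key3 : ∀ (α β γ : ZMod n) (a b c : L), a ∈ A α → b ∈ A β → c ∈ A γ →
      ∀ x : L, ⁅⁅a, b⁆, ⁅c, x⁆⁆ = 0 := by
    intro α β γ a b c ha hb hc x
    refine Submodule.iSup_induction A (motive := fun x => ⁅⁅a, b⁆, ⁅c, x⁆⁆ = 0) (htop x) ?_ ?_ ?_
    · intro δ d hd; exact key4 α β γ δ a b c d ha hb hc hd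
    · show ⁅⁅a, b⁆, ⁅c, (0 : L)⁆⁆ = 0
      rw [lie_zero, lie_zero]
    · intro u v hu hv
      have hu' : ⁅⁅a, b⁆, ⁅c, u⁆⁆ = 0 := hu
      have hv' : ⁅⁅a, b⁆, ⁅c, v⁆⁆ = 0 := hv
      show ⁅⁅a, b⁆, ⁅c, u + v⁆⁆ = 0
      rw [lie_add, lie_add, hu', hv', add_zero]
  have key2 : ∀ (α β : ZMod n) (a b : L), a ∈ A α → b ∈ A β →
      ∀ c x : L, ⁅⁅a, b⁆, ⁅c, x⁆⁆ = 0 := by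
    intro α β a b ha hb c
    refine Submodule.iSup_induction A
      (motive := fun c => ∀ x : L, ⁅⁅a, b⁆, ⁅c, x⁆⁆ = 0) (htop c) ?_ ?_ ?_
    · intro γ c hc; exact key3 α β γ a b c ha hb hc
    · show ∀ x : L, ⁅⁅a, b⁆, ⁅(0 : L), x⁆⁆ = 0
      intro x; rw [zero_lie, lie_zero]
    · intro u v hu hv
      have hu' : ∀ x : L, ⁅⁅a, b⁆, ⁅u, x⁆⁆ = 0 := hu
      have hv' : ∀ x : L, ⁅⁅a, b⁆, ⁅v, x⁆⁆ = 0 := hv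
      show ∀ x : L, ⁅⁅a, b⁆, ⁅u + v, x⁆⁆ = 0
      intro x; rw [add_lie, lie_add, hu' x, hv' x, add_zero]
  have key1 : ∀ (α : ZMod n) (a : L), a ∈ A α →
      ∀ b c x : L, ⁅⁅a, b⁆, ⁅c, x⁆⁆ = 0 := by
    intro α a ha b
    refine Submodule.iSup_induction A
      (motive := fun b => ∀ c x : L, ⁅⁅a, b⁆, ⁅c, x⁆⁆ = 0) (htop b) ?_ ?_ ?_
    · intro β b hb; exact key2 α β a b ha hb
    · show ∀ c x : L, ⁅⁅a, (0 : L)⁆, ⁅c, x⁆⁆ = 0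
      intro c x; rw [lie_zero, zero_lie]
    · intro u v hu hv
      have hu' : ∀ c x : L, ⁅⁅a, u⁆, ⁅c, x⁆⁆ = 0 := hu
      have hv' : ∀ c x : L, ⁅⁅a, v⁆, ⁅c, x⁆⁆ = 0 := hv
      show ∀ c x : L, ⁅⁅a, u + v⁆, ⁅c, x⁆⁆ = 0
      intro c x; rw [lie_add, add_lie, hu' c x, hv' c x, add_zero]
  have F : ∀ a b c x : L, ⁅⁅a, b⁆, ⁅c, x⁆⁆ = 0 := by
    intro a
    refine Submodule.iSup_induction A
      (motive := fun a => ∀ b c x : L, ⁅⁅a, b⁆, ⁅c, x⁆⁆ = 0) (htop a) ?_ ?_ ?_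
    · intro α a ha b c x; exact key1 α a ha b c x
    · show ∀ b c x : L, ⁅⁅(0 : L), b⁆, ⁅c, x⁆⁆ = 0
      intro b c x; rw [zero_lie, zero_lie]
    · intro u v hu hv
      have hu' : ∀ b c x : L, ⁅⁅u, b⁆, ⁅c, x⁆⁆ = 0 := hu
      have hv' : ∀ b c x : L, ⁅⁅v, b⁆, ⁅c, x⁆⁆ = 0 := hv
      show ∀ b c x : L, ⁅⁅u + v, b⁆, ⁅c, x⁆⁆ = 0
      intro b c x; rw [add_lie, add_lie, hu' b c x, hv' b c x, add_zero]
  -- conclude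
  have step1 : ∀ q : L, q ∈ LieAlgebra.derivedSeries K L 1 → ∀ a b : L, ⁅⁅a, b⁆, q⁆ = 0 := by
    intro q hq
    rw [LieAlgebra.derivedSeries_def, LieAlgebra.derivedSeriesOfIdeal_succ,
      LieAlgebra.derivedSeriesOfIdeal_zero, ← LieSubmodule.mem_toSubmodule,
      LieSubmodule.lieIdeal_oper_eq_linear_span] at hq
    refine Submodule.span_induction ?_ ?_ ?_ ?_ hq
    · rintro m ⟨x, y, rfl⟩ a b; exact F a b x y
    · intro a b; rw [lie_zero]
    · intro u v _ _ hu hv a b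
      have hu' : ⁅⁅a, b⁆, u⁆ = 0 := hu a b
      have hv' : ⁅⁅a, b⁆, v⁆ = 0 := hv a b
      show ⁅⁅a, b⁆, u + v⁆ = 0
      rw [lie_add, hu', hv', add_zero]
    · intro t u _ hu a b
      have hu' : ⁅⁅a, b⁆, u⁆ = 0 := hu a b
      show ⁅⁅a, b⁆, t • u⁆ = 0
      rw [lie_smul, hu', smul_zero]
  show LieAlgebra.derivedSeriesOfIdeal K L 2 ⊤ = ⊥
  rw [LieAlgebra.derivedSeriesOfIdeal_succ, LieSubmodule.lie_eq_bot_iff]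
  intro p hp m hm
  rw [← LieSubmodule.mem_toSubmodule] at hm
  rw [show LieAlgebra.derivedSeriesOfIdeal K L 1 ⊤ =
      ⁅(⊤ : LieIdeal K L), (⊤ : LieIdeal K L)⁆ from by
        rw [LieAlgebra.derivedSeriesOfIdeal_succ, LieAlgebra.derivedSeriesOfIdeal_zero],
    LieSubmodule.lieIdeal_oper_eq_linear_span] at hm
  refine Submodule.span_induction ?_ ?_ ?_ ?_ hm
  · rintro m ⟨x, y, rfl⟩
    show ⁅p, ⁅(x : L), (y : L)⁆⁆ = 0
    rw [swapo p ⁅(x : L), (y : L)⁆, step1 p hp x y, neg_zero]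
  · show ⁅p, (0 : L)⁆ = 0
    rw [lie_zero]
  · intro u v _ _ hu hv
    have hu' : ⁅p, u⁆ = 0 := hu
    have hv' : ⁅p, v⁆ = 0 := hv
    show ⁅p, u + v⁆ = 0
    rw [lie_add, hu', hv', add_zero]
  · intro t u _ hu
    have hu' : ⁅p, u⁆ = 0 := hu
    show ⁅p, t • u⁆ = 0
    rw [lie_smul, hu', smul_zero]
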